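/- arXiv:2008.04406 — 2 statements merged into one kernel-verified Lean document; each statement's English description precedes it below -/
import Mathlib

section
/- Let A be a complex symmetric N×N matrix, w ∈ ℂ^N with |w| = 1, k a positive integer, and let ψ_{A,w}(z) = e^{−k} e^{kQ_A(w)/2} e^{kQ_A(z)/2} e^{k z(w̄ᵀ − Awᵀ)} (the Gaussian coherent state restricted to |z| = 1). Then the Fourier coefficient (1/2π)∫₀^{2π} e^{−ikt} ψ_{A,w}(e^{it}z) dt equals e^{−k} e^{kQ_A(w)/2} ∑_{⌈k/2⌉ ≤ ℓ ≤ k} [kˡ / ((k−ℓ)!(2ℓ−k)!)] (Q_A(z)/2)^{k−ℓ} (z(w̄ᵀ − Awᵀ))^{2ℓ−k}. -/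
open scoped BigOperators Real
open Matrix
open scoped ComplexOrder

/-- `Q_A(z) = z A zᵀ`. -/
noncomputable def quadForm {N : ℕ} (A : Matrix (Fin N) (Fin N) ℂ) (z : Fin N → ℂ) : ℂ :=
  ∑ i, ∑ j, z i * A i j * z j

/-- Hermitian pairing `z w̄ᵀ`. -/
noncomputable def dotc {N : ℕ} (z w : Fin N → ℂ) : ℂ :=
  ∑ j, z j * (starRingEnd ℂ) (w j)

/-- `|z|²`. -/
noncomputable def nsq {N : ℕ} (z : Fin N → ℂ) : ℝ :=
  ∑ j, Complex.normSq (z j)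

/-- The rewritten Gaussian coherent state
`ψ_{A,w}(z) = e^{−k} e^{kQ_A(w)/2} e^{kQ_A(z)/2} e^{k z(w̄ᵀ − Awᵀ)}` (valid on `|z|=1`). -/
noncomputable def psiS {N : ℕ} (k : ℕ) (A : Matrix (Fin N) (Fin N) ℂ)
    (w : Fin N → ℂ) (z : Fin N → ℂ) : ℂ :=
  Complex.exp (-(k : ℂ)) * Complex.exp ((k : ℂ) * quadForm A w / 2) *
    Complex.exp ((k : ℂ) * quadForm A z / 2) *
    Complex.exp ((k : ℂ) * (dotc z w - ∑ j, z j * (A.mulVec w) j))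

lemma orth (d : ℤ) : ∫ t in (0:ℝ)..(2*π), Complex.exp (Complex.I * d * t)
    = if d = 0 then ((2*π : ℝ) : ℂ) else 0 := by
  split_ifs with h
  · subst h; simp
  · have hc : (Complex.I * d) ≠ 0 := by
      simp [Complex.I_ne_zero, Complex.ext_iff]
      exact_mod_cast h
    have h2 := integral_exp_mul_complex (a := (0:ℝ)) (b := 2*π) hc
    simp only [mul_assoc] at h2 ⊢
    rw [h2]
    have h3 : Complex.exp (Complex.I * ((d:ℂ) * ((2*π:ℝ):ℂ))) = 1 := by
      rw [show Complex.I * ((d:ℂ) * ((2*π:ℝ):ℂ)) = (d:ℤ) * (2*π*Complex.I) by push_cast; ring]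
      exact Complex.exp_int_mul_two_pi_mul_I d
    push_cast at h3 ⊢
    rw [h3]
    simp

set_option maxHeartbeats 1000000 in
/-- Exact expansion of the reduced state (Proposition 1.6): the `k`-th Fourier
coefficient of `t ↦ ψ_{A,w}(e^{it}z)` is the stated finite sum. -/
theorem stmt4 {N : ℕ} (k : ℕ) (hk : 0 < k) (A : Matrix (Fin N) (Fin N) ℂ)
    (hsym : A.IsSymm) (w z : Fin N → ℂ) (hw : nsq w = 1) (hz : nsq z = 1) :
    (1 / (2 * π)) * ∫ t in (0 : ℝ)..(2 * π),
        Complex.exp (-Complex.I * k * t) *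
          psiS k A w (fun j => Complex.exp (Complex.I * t) * z j)
      = Complex.exp (-(k : ℂ)) * Complex.exp ((k : ℂ) * quadForm A w / 2) *
        ∑ ℓ ∈ Finset.filter (fun ℓ => k ≤ 2 * ℓ) (Finset.range (k + 1)),
          ((k : ℂ) ^ ℓ / ((Nat.factorial (k - ℓ) : ℂ) * (Nat.factorial (2 * ℓ - k) : ℂ))) *
            (quadForm A z / 2) ^ (k - ℓ) *
            (dotc z w - ∑ j, z j * (A.mulVec w) j) ^ (2 * ℓ - k) := by
  set C : ℂ := Complex.exp (-(k : ℂ)) * Complex.exp ((k : ℂ) * quadForm A w / 2) with hC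
  set u : ℂ := (k : ℂ) * quadForm A z / 2 with hu
  set v : ℂ := (k : ℂ) * (dotc z w - ∑ j, z j * (A.mulVec w) j) with hv
  -- coefficient
  set c : ℕ × ℕ → ℂ := fun p => C * (u ^ p.1 / (Nat.factorial p.1 : ℂ)) *
      (v ^ p.2 / (Nat.factorial p.2 : ℂ)) with hcdef
  set F : ℕ × ℕ → ℝ → ℂ := fun p t =>
      c p * Complex.exp (Complex.I * (((2 * p.1 + p.2 : ℕ) : ℂ) - k) * t) with hF
  -- pointwise expansion
  have key : ∀ t : ℝ, HasSum (fun p : ℕ × ℕ => F p t)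
      (Complex.exp (-Complex.I * k * t) *
        psiS k A w (fun j => Complex.exp (Complex.I * t) * z j)) := by
    intro t
    set E : ℂ := Complex.exp (Complex.I * t) with hE
    have hq : quadForm A (fun j => E * z j) = E ^ 2 * quadForm A z := by
      simp only [quadForm, Finset.mul_sum]
      refine Finset.sum_congr rfl fun i _ => Finset.sum_congr rfl fun j _ => by ring
    have hd : dotc (fun j => E * z j) w = E * dotc z w := by
      simp only [dotc, Finset.mul_sum]
      exact Finset.sum_congr rfl fun j _ => by ring
    have hs : ∑ j, (E * z j) * (A.mulVec w) j = E * ∑ j, z j * (A.mulVec w) j := by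
      simp only [Finset.mul_sum]
      exact Finset.sum_congr rfl fun j _ => by ring
    have hpsi : psiS k A w (fun j => E * z j)
        = C * (Complex.exp (u * E ^ 2) * Complex.exp (v * E)) := by
      simp only [psiS, hq, hd, hs]
      rw [hC, hu, hv]
      ring_nf
    have h1 : HasSum (fun m : ℕ => (u * E ^ 2) ^ m / (Nat.factorial m : ℂ))
        (Complex.exp (u * E ^ 2)) := by
      rw [Complex.exp_eq_exp_ℂ]
      exact NormedSpace.expSeries_div_hasSum_exp (u * E ^ 2)
    have h2 : HasSum (fun m : ℕ => (v * E) ^ m / (Nat.factorial m : ℂ))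
        (Complex.exp (v * E)) := by
      rw [Complex.exp_eq_exp_ℂ]
      exact NormedSpace.expSeries_div_hasSum_exp (v * E)
    have hnorm : ∀ (a : ℂ) (m : ℕ), ‖a ^ m / (Nat.factorial m : ℂ)‖
        = ‖a‖ ^ m / (Nat.factorial m : ℝ) := by
      intro a m
      rw [norm_div, norm_pow]
      norm_num
    have hsummable : Summable (fun p : ℕ × ℕ =>
        ((u * E ^ 2) ^ p.1 / (Nat.factorial p.1 : ℂ)) *
        ((v * E) ^ p.2 / (Nat.factorial p.2 : ℂ))) := by
      apply Summable.of_norm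
      have : Summable (fun p : ℕ × ℕ =>
          (‖u * E ^ 2‖ ^ p.1 / (Nat.factorial p.1 : ℝ)) *
          (‖v * E‖ ^ p.2 / (Nat.factorial p.2 : ℝ))) :=
        (Real.summable_pow_div_factorial _).mul_of_nonneg
          (Real.summable_pow_div_factorial _)
          (fun m => by positivity) (fun m => by positivity)
      refine this.congr fun p => ?_
      simp only [norm_mul, norm_div, norm_pow, Complex.norm_natCast]
    have hmul := ((h1.mul h2 hsummable).mul_left
      (C * Complex.exp (-Complex.I * k * t)))
    rw [hpsi]
    have : (fun p : ℕ × ℕ => C * Complex.exp (-Complex.I * k * t) *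
        (((u * E ^ 2) ^ p.1 / (Nat.factorial p.1 : ℂ)) *
         ((v * E) ^ p.2 / (Nat.factorial p.2 : ℂ)))) = fun p => F p t := by
      funext p
      have hexp : Complex.exp (-Complex.I * k * t) * E ^ (2 * p.1 + p.2)
          = Complex.exp (Complex.I * (((2 * p.1 + p.2 : ℕ) : ℂ) - k) * t) := by
        rw [hE, ← Complex.exp_nat_mul, ← Complex.exp_add]
        congr 1
        push_cast
        ring
      calc C * Complex.exp (-Complex.I * k * t) *
          (((u * E ^ 2) ^ p.1 / (Nat.factorial p.1 : ℂ)) *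
           ((v * E) ^ p.2 / (Nat.factorial p.2 : ℂ)))
          = c p * (Complex.exp (-Complex.I * k * t) * E ^ (2 * p.1 + p.2)) := by
            rw [hcdef]
            simp only [mul_pow, pow_mul, pow_add]
            ring
        _ = F p t := by rw [hexp, hF]
    rw [← this]
    convert hmul using 1
    · rfl
    · ring
  -- integrate term by term
  have hle : (0:ℝ) ≤ 2 * π := by positivity
  have hnormF : ∀ p t, ‖F p t‖ = ‖c p‖ := by
    intro p t
    rw [hF]
    simp only [norm_mul]
    have : Complex.I * (((2 * p.1 + p.2 : ℕ) : ℂ) - k) * t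
        = ((((2 * p.1 + p.2 : ℕ) : ℝ) - k) * t : ℝ) * Complex.I := by
      push_cast; ring
    have h0 : ∀ r : ℝ, ‖Complex.exp ((r:ℂ) * Complex.I)‖ = 1 := fun r => by
      rw [Complex.norm_exp_ofReal_mul_I]
    rw [this, h0, mul_one]
  have hπ : ((2*π:ℝ) : ℂ) ≠ 0 := by
    simp [Real.pi_ne_zero]
  have hmeas : MeasureTheory.volume (Set.Ioc (0:ℝ) (2*π)) = ENNReal.ofReal (2*π) := by
    simp [Real.volume_Ioc]
  have hint : ∀ p : ℕ × ℕ, MeasureTheory.IntegrableOn (F p) (Set.Ioc (0:ℝ) (2*π)) := by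
    intro p
    apply Continuous.integrableOn_Ioc
    rw [hF]
    fun_prop
  have hnormint : ∀ p : ℕ × ℕ,
      (∫ t in Set.Ioc (0:ℝ) (2*π), ‖F p t‖) = (2*π) * ‖c p‖ := by
    intro p
    simp only [hnormF]
    rw [MeasureTheory.setIntegral_const, MeasureTheory.measureReal_def, hmeas, ENNReal.toReal_ofReal hle, smul_eq_mul]
  have hsumnorm : Summable (fun p : ℕ × ℕ => ∫ t in Set.Ioc (0:ℝ) (2*π), ‖F p t‖) := by
    simp only [hnormint]
    apply Summable.mul_left
    have hsum2 : Summable (fun p : ℕ × ℕ =>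
        ‖C‖ * ((‖u‖ ^ p.1 / (Nat.factorial p.1 : ℝ)) *
        (‖v‖ ^ p.2 / (Nat.factorial p.2 : ℝ)))) :=
      (((Real.summable_pow_div_factorial _).mul_of_nonneg
        (Real.summable_pow_div_factorial _)
        (fun m => by positivity) (fun m => by positivity)).mul_left _)
    refine hsum2.congr fun p => ?_
    rw [hcdef]
    simp only [norm_mul, norm_div, norm_pow, Complex.norm_natCast]
    ring
  have heq : ∀ t : ℝ, (∑' p : ℕ × ℕ, F p t)
      = Complex.exp (-Complex.I * k * t) *
        psiS k A w (fun j => Complex.exp (Complex.I * t) * z j) := fun t => (key t).tsum_eq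
  have hHS : HasSum (fun p : ℕ × ℕ => ∫ t in Set.Ioc (0:ℝ) (2*π), F p t)
      (∫ t in Set.Ioc (0:ℝ) (2*π), Complex.exp (-Complex.I * k * t) *
        psiS k A w (fun j => Complex.exp (Complex.I * t) * z j)) := by
    have h := MeasureTheory.hasSum_integral_of_summable_integral_norm hint hsumnorm
    simpa only [heq] using h
  have hval : ∀ p : ℕ × ℕ, (∫ t in Set.Ioc (0:ℝ) (2*π), F p t)
      = if 2*p.1+p.2 = k then ((2*π:ℝ):ℂ) * c p else 0 := by
    intro p
    have hcast : ∀ t : ℝ, F p t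
        = c p * Complex.exp (Complex.I * (((2*p.1+p.2 : ℕ) : ℤ) - (k:ℤ) : ℤ) * t) := by
      intro t
      rw [hF]
      push_cast
      ring_nf
    rw [← intervalIntegral.integral_of_le hle]
    simp only [hcast]
    rw [intervalIntegral.integral_const_mul, orth]
    split_ifs with h1 h2 h2
    · ring
    · omega
    · omega
    · ring
  have htsum : (∫ t in Set.Ioc (0:ℝ) (2*π), Complex.exp (-Complex.I * k * t) *
        psiS k A w (fun j => Complex.exp (Complex.I * t) * z j))
      = ∑' p : ℕ × ℕ, (if 2*p.1+p.2 = k then ((2*π:ℝ):ℂ) * c p else 0) := by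
    rw [← hHS.tsum_eq]
    exact tsum_congr hval
  set S : Finset ℕ := Finset.filter (fun ℓ => k ≤ 2 * ℓ) (Finset.range (k + 1)) with hS
  have hfin : (∑' p : ℕ × ℕ, (if 2*p.1+p.2 = k then ((2*π:ℝ):ℂ) * c p else 0))
      = ∑ ℓ ∈ S, ((2*π:ℝ):ℂ) * c (k - ℓ, 2*ℓ - k) := by
    have h0 : ∀ p ∉ S.image (fun ℓ => (k - ℓ, 2*ℓ - k)),
        (if 2*p.1+p.2 = k then ((2*π:ℝ):ℂ) * c p else 0) = 0 := by
      intro p hp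
      split_ifs with h
      · exfalso
        apply hp
        rw [Finset.mem_image]
        refine ⟨k - p.1, ?_, ?_⟩
        · rw [hS]
          simp only [Finset.mem_filter, Finset.mem_range]
          omega
        · obtain ⟨a, b⟩ := p
          simp only [Prod.mk.injEq]
          simp only at h
          omega
      · rfl
    have hinj : ∀ x ∈ S, ∀ y ∈ S, (fun ℓ => (k - ℓ, 2*ℓ - k)) x = (fun ℓ => (k - ℓ, 2*ℓ - k)) y → x = y := by
      intro x hx y hy hxy
      rw [hS] at hx hy
      simp only [Finset.mem_filter, Finset.mem_range] at hx hy
      have h1 := congrArg Prod.fst hxy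
      simp only at h1
      omega
    rw [tsum_eq_sum h0, Finset.sum_image hinj]
    apply Finset.sum_congr rfl
    intro ℓ hℓ
    rw [hS] at hℓ
    simp only [Finset.mem_filter, Finset.mem_range] at hℓ
    rw [if_pos]
    simp only
    omega
  rw [intervalIntegral.integral_of_le hle, htsum, hfin, Finset.mul_sum, Finset.mul_sum]
  apply Finset.sum_congr rfl
  intro ℓ hℓ
  rw [hS] at hℓ
  simp only [Finset.mem_filter, Finset.mem_range] at hℓ
  have hf1 : ((Nat.factorial (k - ℓ) : ℂ)) ≠ 0 :=
    Nat.cast_ne_zero.mpr (Nat.factorial_ne_zero _)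
  have hf2 : ((Nat.factorial (2*ℓ - k) : ℂ)) ≠ 0 :=
    Nat.cast_ne_zero.mpr (Nat.factorial_ne_zero _)
  have hkpow : ((k:ℂ)) ^ ℓ = (k:ℂ) ^ (k - ℓ) * (k:ℂ) ^ (2*ℓ - k) := by
    rw [← pow_add]
    congr 1
    omega
  rw [hcdef]
  simp only
  rw [show u = (k:ℂ) * (quadForm A z / 2) by rw [hu]; ring, hv, mul_pow, mul_pow, hkpow]
  have h2pi : (1 / (2 * (π:ℂ))) * ((2*π:ℝ):ℂ) = 1 := by
    push_cast
    field_simp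
  field_simp
  push_cast
  ring
end

section
/- Let A, B be complex symmetric N×N matrices with operator norms < 1, and v, w ∈ ℂ^N with v ≠ w. Then the real phase function φ(z, z̄) = Q_A(z−w)/2 + conj(Q_B(z−v))/2 + z w̄ᵀ + z̄ vᵀ − |v|²/2 − |w|²/2 − |z|² has no critical points on ℂ^N: the equations ∂φ/∂z = (z−w)A + w̄ − z̄ = 0 and the conjugate of ∂φ/∂z̄ = (z−v)B + v̄ − z̄ = 0 cannot hold simultaneously. -/
open scoped BigOperators
open Matrix
open scoped ComplexOrder

/-- Componentwise complex conjugate of a vector. -/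
noncomputable def conjVec {N : ℕ} (z : Fin N → ℂ) : Fin N → ℂ :=
  fun i => (starRingEnd ℂ) (z i)

lemma conjVec_eq_star {N : ℕ} (z : Fin N → ℂ) : conjVec z = star z := rfl

lemma key {N : ℕ} (A : Matrix (Fin N) (Fin N) ℂ) (hAsym : A.IsSymm)
    (hA : (1 - Aᴴ * A).PosDef) (u : Fin N → ℂ)
    (h : Matrix.vecMul u A = conjVec u) : u = 0 := by
  have h1 : A *ᵥ u = star u := by
    rw [conjVec_eq_star] at h
    rw [← h, ← Matrix.mulVec_transpose, hAsym.eq]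
  have hst := congrArg star h1
  rw [star_star] at hst
  have h2 : Aᴴ *ᵥ star u = u := by
    funext i
    have := congrFun hst i
    simp only [Pi.star_apply, Matrix.mulVec, dotProduct,
      Matrix.conjTranspose_apply, hAsym.apply, star_sum, star_mul'] at this ⊢
    exact this
  have h3 : (Aᴴ * A) *ᵥ u = u := by
    rw [← Matrix.mulVec_mulVec, h1, h2]
  by_contra hu
  have hp := hA.dotProduct_mulVec_pos hu
  have hz : (1 - Aᴴ * A) *ᵥ u = 0 := by
    rw [Matrix.sub_mulVec, Matrix.one_mulVec, h3, sub_self]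
  rw [hz] at hp
  simp at hp

/-- Overlap phase has no critical points when the centers differ:
the equations `(z−w)A + w̄ − z̄ = 0` and `(z−v)B + v̄ − z̄ = 0` cannot hold
simultaneously for symmetric `A`, `B` of operator norm `< 1` and `v ≠ w`. -/
theorem stmt10 {N : ℕ} (A B : Matrix (Fin N) (Fin N) ℂ)
    (hAsym : A.IsSymm) (hBsym : B.IsSymm)
    (hA : (1 - Aᴴ * A).PosDef) (hB : (1 - Bᴴ * B).PosDef)
    (v w : Fin N → ℂ) (hvw : v ≠ w) :
    ∀ z : Fin N → ℂ,
      ¬ (Matrix.vecMul (z - w) A + conjVec w - conjVec z = 0 ∧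
         Matrix.vecMul (z - v) B + conjVec v - conjVec z = 0) := by
  rintro z ⟨h1, h2⟩
  have e1 : Matrix.vecMul (z - w) A = conjVec (z - w) := by
    have := eq_sub_of_add_eq (sub_eq_zero.mp h1)
    rw [this, conjVec_eq_star, conjVec_eq_star, conjVec_eq_star, star_sub]
  have e2 : Matrix.vecMul (z - v) B = conjVec (z - v) := by
    have := eq_sub_of_add_eq (sub_eq_zero.mp h2)
    rw [this, conjVec_eq_star, conjVec_eq_star, conjVec_eq_star, star_sub]
  have hw : z = w := by have := key A hAsym hA _ e1; rwa [sub_eq_zero] at this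
  have hv : z = v := by have := key B hBsym hB _ e2; rwa [sub_eq_zero] at this
  exact hvw (hv ▸ hw ▸ rfl)
end
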